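/- arXiv:2006.05463 — 6 statements merged into one kernel-verified Lean document; each statement's English description precedes it below -/
import Mathlib

section
/- If the action set Act is finite and nonempty, then the inclusion of verdict equivalence in ω-verdict equivalence is strict: the monitors yes and Σ_{a ∈ Act} a.yes are ω-verdict equivalent but not verdict equivalent. -/
/-- Recursion-free regular monitors (with variables). -/
inductive Mon (Act : Type) : Type
  | end_ : Mon Act
  | yes : Mon Act
  | no : Mon Act
  | act : Act → Mon Act → Mon Act
  | plus : Mon Act → Mon Act → Mon Act
  | var : ℕ → Mon Act

variable {Act : Type}

/-- Verdicts: `end`, `yes`, `no`. -/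
inductive IsVerdict : Mon Act → Prop
  | end_ : IsVerdict Mon.end_
  | yes : IsVerdict Mon.yes
  | no : IsVerdict Mon.no

/-- Labelled transition relation; `none` is the silent action τ. -/
inductive Step : Mon Act → Option Act → Mon Act → Prop
  | act (a : Act) (m : Mon Act) : Step (Mon.act a m) (some a) m
  | plusL {m n m' : Mon Act} {α : Option Act} : Step m α m' → Step (Mon.plus m n) α m'
  | plusR {m n n' : Mon Act} {α : Option Act} : Step n α n' → Step (Mon.plus m n) α n'
  | verdict {v : Mon Act} {α : Option Act} : IsVerdict v → Step v α v

/-- Reflexive-transitive closure of τ-steps. -/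
def TauStar (m n : Mon Act) : Prop :=
  Relation.ReflTransGen (fun p q => Step p none q) m n

/-- Strong transition along a finite trace. -/
inductive Trace : Mon Act → List Act → Mon Act → Prop
  | refl (m : Mon Act) : Trace m [] m
  | cons {m m' m'' : Mon Act} {a : Act} {s : List Act} :
      Step m (some a) m' → Trace m' s m'' → Trace m (a :: s) m''

/-- Weak transition along a finite trace (τ-steps allowed throughout). -/
inductive WTrace : Mon Act → List Act → Mon Act → Prop
  | nil {m m' : Mon Act} : TauStar m m' → WTrace m [] m'
  | cons {m m₁ m₂ m' : Mon Act} {a : Act} {s : List Act} :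
      TauStar m m₁ → Step m₁ (some a) m₂ → WTrace m₂ s m' → WTrace m (a :: s) m'

/-- Acceptance language. -/
def La (m : Mon Act) : Set (List Act) := {s | WTrace m s Mon.yes}

/-- Rejection language. -/
def Lr (m : Mon Act) : Set (List Act) := {s | WTrace m s Mon.no}

/-- Verdict equivalence. -/
def VerdEq (m n : Mon Act) : Prop := La m = La n ∧ Lr m = Lr n

/-- `A · Act^ω`: infinite words having a finite prefix in `A`. -/
def omegaCl (A : Set (List Act)) : Set (ℕ → Act) :=
  {w | ∃ n : ℕ, (List.range n).map w ∈ A}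

/-- ω-verdict equivalence. -/
def OmegaEq (m n : Mon Act) : Prop :=
  omegaCl (La m) = omegaCl (La n) ∧ omegaCl (Lr m) = omegaCl (Lr n)

/-- Closed monitors: no variables. -/
def Closed : Mon Act → Prop
  | Mon.act _ m => Closed m
  | Mon.plus m n => Closed m ∧ Closed n
  | Mon.var _ => False
  | _ => True

/-- `yes` occurs as a subterm. -/
def HasYes : Mon Act → Prop
  | Mon.yes => True
  | Mon.act _ m => HasYes m
  | Mon.plus m n => HasYes m ∨ HasYes n
  | _ => False

/-- `no` occurs as a subterm. -/
def HasNo : Mon Act → Prop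
  | Mon.no => True
  | Mon.act _ m => HasNo m
  | Mon.plus m n => HasNo m ∨ HasNo n
  | _ => False

/-- Syntactic depth. -/
def depth : Mon Act → ℕ
  | Mon.act _ m => depth m + 1
  | Mon.plus m n => max (depth m) (depth n)
  | _ => 0

/-- Applying a substitution. -/
def msubst (σ : ℕ → Mon Act) : Mon Act → Mon Act
  | Mon.var x => σ x
  | Mon.act a m => Mon.act a (msubst σ m)
  | Mon.plus m n => Mon.plus (msubst σ m) (msubst σ n)
  | m => m

/-- Equational derivability from an axiom set `E`. -/
inductive Deriv (E : Mon Act → Mon Act → Prop) : Mon Act → Mon Act → Prop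
  | ax {m n} : E m n → Deriv E m n
  | refl (m) : Deriv E m m
  | symm {m n} : Deriv E m n → Deriv E n m
  | trans {m n p} : Deriv E m n → Deriv E n p → Deriv E m p
  | act (a : Act) {m n} : Deriv E m n → Deriv E (Mon.act a m) (Mon.act a n)
  | plus {m m' n n'} : Deriv E m m' → Deriv E n n' → Deriv E (Mon.plus m n) (Mon.plus m' n')
  | subst (σ : ℕ → Mon Act) {m n} : Deriv E m n → Deriv E (msubst σ m) (msubst σ n)

def vx : Mon Act := Mon.var 0
def vy : Mon Act := Mon.var 1
def vz : Mon Act := Mon.var 2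

/-- The axiom system `E_v`. -/
inductive EvAx : Mon Act → Mon Act → Prop
  | A1 : EvAx (Mon.plus vx vy) (Mon.plus vy vx)
  | A2 : EvAx (Mon.plus vx (Mon.plus vy vz)) (Mon.plus (Mon.plus vx vy) vz)
  | A3 : EvAx (Mon.plus vx vx) vx
  | A4 : EvAx (Mon.plus vx Mon.end_) vx
  | Ea (a : Act) : EvAx (Mon.act a Mon.end_) Mon.end_
  | Ya (a : Act) : EvAx Mon.yes (Mon.plus Mon.yes (Mon.act a Mon.yes))
  | Na (a : Act) : EvAx Mon.no (Mon.plus Mon.no (Mon.act a Mon.no))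
  | Da (a : Act) : EvAx (Mon.act a (Mon.plus vx vy)) (Mon.plus (Mon.act a vx) (Mon.act a vy))

/-- Sum of a list of monitors (`end` for the empty sum). -/
def sumList : List (Mon Act) → Mon Act
  | [] => Mon.end_
  | [m] => m
  | m :: ms => Mon.plus m (sumList ms)

/-- `s.m`: the monitor performing exactly the actions of `s` and then behaving as `m`. -/
def prefixMon (s : List Act) (m : Mon Act) : Mon Act :=
  List.foldr Mon.act m s

/-- Build `Σ_{(a,m)∈l} a.m [+ yes] [+ no]`. -/
def buildNF (l : List (Act × Mon Act)) (hy hn : Bool) : Mon Act :=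
  sumList (l.map (fun p => Mon.act p.1 p.2) ++
    (if hy then [Mon.yes] else []) ++ (if hn then [Mon.no] else []))

/-- Normal forms for closed monitors. -/
inductive NF : Mon Act → Prop
  | mk (l : List (Act × Mon Act)) (hy hn : Bool) :
      (l.map Prod.fst).Nodup →
      (∀ p ∈ l, p.2 ≠ Mon.end_) →
      (∀ p ∈ l, NF p.2) →
      NF (buildNF l hy hn)

/-- Build `Σ_{(a,m)∈l} a.m + Σ_{x∈vs} x [+ yes] [+ no]`. -/
def buildONF (l : List (Act × Mon Act)) (vs : List ℕ) (hy hn : Bool) : Mon Act :=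
  sumList (l.map (fun p => Mon.act p.1 p.2) ++ vs.map Mon.var ++
    (if hy then [Mon.yes] else []) ++ (if hn then [Mon.no] else []))

/-- Open normal forms. -/
inductive ONF : Mon Act → Prop
  | mk (l : List (Act × Mon Act)) (vs : List ℕ) (hy hn : Bool) :
      (l.map Prod.fst).Nodup → vs.Nodup →
      (∀ p ∈ l, p.2 ≠ Mon.end_) →
      (∀ p ∈ l, ONF p.2) →
      ONF (buildONF l vs hy hn)

/-- `s^i`: the `i`-fold concatenation of `s`. -/
def spow (s : List Act) (i : ℕ) : List Act := (List.replicate i s).flatten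

/-- All traces of length exactly `n` over the alphabet listed by `L`. -/
def tuples (L : List Act) : ℕ → List (List Act)
  | 0 => [[]]
  | n + 1 => (tuples L n).flatMap (fun t => L.map (fun a => a :: t))

/-- All traces of length at most `n`. -/
def allUpTo (L : List Act) (n : ℕ) : List (List Act) :=
  (List.range (n + 1)).flatMap (tuples L)

/-- `s̄^≤(m)`: sum of `s'.m` over traces `s'` with `|s'| ≤ |s|` that are not prefixes of `s`. -/
def sbarLe [DecidableEq Act] (L : List Act) (s : List Act) (m : Mon Act) : Mon Act :=
  sumList (((allUpTo L s.length).filter (fun t => !(t.isPrefixOf s))).map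
    (fun t => prefixMon t m))

/-- `s̄(m) = s̄^≤(m) + s.Σ_{a∈Act} a.m`. -/
def sbar [DecidableEq Act] (L : List Act) (s : List Act) (m : Mon Act) : Mon Act :=
  Mon.plus (sbarLe L s m) (prefixMon s (sumList (L.map fun a => Mon.act a m)))

/-- `s̄^(k)(m)`. -/
def sbarK [DecidableEq Act] (L : List Act) (s : List Act) (m : Mon Act) : ℕ → Mon Act
  | 0 => sbar L s m
  | 1 => sbar L s m
  | k + 2 =>
      Mon.plus
        (sumList ((List.range k).map (fun i => prefixMon (spow s (i + 1)) (sbarLe L s m))))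
        (prefixMon (spow s (k + 1)) (sbar L s m))

namespace Stmt4Aux

/-- Abbreviation for the sum monitor. -/
def N (l : List Act) : Mon Act := sumList (l.map (fun a => Mon.act a Mon.yes))

lemma sumStep : ∀ (l : List Act) {α} {m' : Mon Act},
    Step (N l) α m' → (∃ a ∈ l, α = some a ∧ m' = Mon.yes) ∨ (l = [] ∧ m' = Mon.end_)
  | [], α, m', h => by
      simp only [N, List.map_nil, sumList] at h
      cases h with
      | verdict hv => exact Or.inr ⟨rfl, rfl⟩
  | [a], α, m', h => by
      simp only [N, List.map_cons, List.map_nil, sumList] at h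
      cases h with
      | act => exact Or.inl ⟨a, by simp, rfl, rfl⟩
      | verdict hv => cases hv
  | a :: b :: t, α, m', h => by
      simp only [N, List.map_cons, sumList] at h
      cases h with
      | plusL h1 =>
          cases h1 with
          | act => exact Or.inl ⟨a, by simp, rfl, rfl⟩
          | verdict hv => cases hv
      | plusR h1 =>
          have h1' : Step (N (b :: t)) α m' := by
            simpa [N, List.map_cons] using h1
          rcases sumStep (b :: t) h1' with ⟨c, hc, h2, h3⟩ | ⟨h2, _⟩
          · exact Or.inl ⟨c, List.mem_cons_of_mem _ hc, h2, h3⟩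
          · exact absurd h2 (by simp)
      | verdict hv => cases hv

lemma sumStepMem : ∀ (l : List Act) (a : Act), a ∈ l → Step (N l) (some a) Mon.yes
  | [], a, h => absurd h List.not_mem_nil
  | [b], a, h => by
      rcases List.mem_singleton.mp h with rfl
      simp only [N, List.map_cons, List.map_nil, sumList]
      exact Step.act a Mon.yes
  | b :: c :: t, a, h => by
      simp only [N, List.map_cons, sumList]
      rcases List.mem_cons.mp h with rfl | h
      · exact Step.plusL (Step.act a Mon.yes)
      · exact Step.plusR (by
          have := sumStepMem (c :: t) a h
          simpa [N, List.map_cons] using this)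

lemma N_ne_verdict {l : List Act} (hl : l ≠ []) :
    N l ≠ Mon.yes ∧ N l ≠ Mon.no := by
  match l with
  | [] => exact absurd rfl hl
  | [a] => simp only [N, List.map_cons, List.map_nil, sumList]; exact ⟨by simp, by simp⟩
  | a :: b :: t => simp only [N, List.map_cons, sumList]; exact ⟨by simp, by simp⟩

lemma step_yes {α} {m' : Mon Act} (h : Step Mon.yes α m') : m' = Mon.yes := by
  cases h with
  | verdict hv => rfl

lemma tauStar_yes {m : Mon Act} (h : TauStar Mon.yes m) : m = Mon.yes := by
  induction h with
  | refl => rfl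
  | tail _ h2 ih => subst ih; exact step_yes h2

lemma wtrace_yes {m : Mon Act} {s : List Act} {m' : Mon Act}
    (h : WTrace m s m') (hm : m = Mon.yes) : m' = Mon.yes := by
  induction h with
  | nil htau => subst hm; exact tauStar_yes htau
  | cons htau hstep _ ih =>
      subst hm
      have h1 := tauStar_yes htau; subst h1
      exact ih (step_yes hstep)

lemma yesTrace : ∀ s : List Act, WTrace Mon.yes s Mon.yes
  | [] => WTrace.nil Relation.ReflTransGen.refl
  | _ :: s => WTrace.cons Relation.ReflTransGen.refl
      (Step.verdict IsVerdict.yes) (yesTrace s)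

lemma tauStar_N {l : List Act} (hl : l ≠ []) {m : Mon Act}
    (h : TauStar (N l) m) : m = N l := by
  induction h with
  | refl => rfl
  | tail _ h2 ih =>
      subst ih
      rcases sumStep l h2 with ⟨a, _, h3, _⟩ | ⟨h3, _⟩
      · exact absurd h3 (by simp)
      · exact absurd h3 hl

lemma La_yes : La (Mon.yes : Mon Act) = Set.univ := by
  ext s; simp only [La, Set.mem_setOf_eq, Set.mem_univ, iff_true]
  exact yesTrace s

lemma Lr_yes : Lr (Mon.yes : Mon Act) = ∅ := by
  ext s; simp only [Lr, Set.mem_setOf_eq, Set.mem_empty_iff_false, iff_false]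
  intro h
  exact absurd (wtrace_yes h rfl) (by simp)

lemma Lr_N {l : List Act} (hl : l ≠ []) : Lr (N l : Mon Act) = ∅ := by
  ext s; simp only [Lr, Set.mem_setOf_eq, Set.mem_empty_iff_false, iff_false]
  intro h
  cases h with
  | nil htau =>
      exact (N_ne_verdict hl).2 (tauStar_N hl htau).symm
  | cons htau hstep htr =>
      have h1 := tauStar_N hl htau; subst h1
      rcases sumStep l hstep with ⟨a, _, _, h3⟩ | ⟨h3, _⟩
      · subst h3
        exact absurd (wtrace_yes htr rfl) (by simp)
      · exact absurd h3 hl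

lemma nil_not_mem_La_N {l : List Act} (hl : l ≠ []) :
    ([] : List Act) ∉ La (N l : Mon Act) := by
  intro h
  cases h with
  | nil htau => exact (N_ne_verdict hl).1 (tauStar_N hl htau).symm

end Stmt4Aux

/-- over a finite nonempty alphabet, `yes` and `Σ_{a∈Act} a.yes` are
ω-verdict equivalent but not verdict equivalent. -/
theorem stmt4 [Fintype Act] [Nonempty Act] :
    OmegaEq (Mon.yes : Mon Act)
        (sumList ((Finset.univ : Finset Act).toList.map (fun a => Mon.act a Mon.yes))) ∧
    ¬ VerdEq (Mon.yes : Mon Act)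
        (sumList ((Finset.univ : Finset Act).toList.map (fun a => Mon.act a Mon.yes))) := by
  set l : List Act := (Finset.univ : Finset Act).toList with hl
  have hne : l ≠ [] := by
    simp [hl, Finset.toList_eq_nil]
    exact (Finset.univ_nonempty (α := Act)).ne_empty
  have hNl : sumList (l.map (fun a => Mon.act a Mon.yes)) = Stmt4Aux.N l := rfl
  rw [hNl]
  constructor
  · constructor
    · ext w
      simp only [omegaCl, Set.mem_setOf_eq]
      constructor
      · intro _
        refine ⟨1, ?_⟩
        have hmem : w 0 ∈ l := by simp [hl]
        have : WTrace (Stmt4Aux.N l) [w 0] Mon.yes :=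
          WTrace.cons Relation.ReflTransGen.refl (Stmt4Aux.sumStepMem l (w 0) hmem)
            (WTrace.nil Relation.ReflTransGen.refl)
        simpa [La, List.range_succ] using this
      · intro _
        exact ⟨0, by simp [Stmt4Aux.La_yes]⟩
    · rw [Stmt4Aux.Lr_yes, Stmt4Aux.Lr_N hne]
  · rintro ⟨hLa, -⟩
    have h1 : ([] : List Act) ∈ La (Mon.yes : Mon Act) := Stmt4Aux.yesTrace []
    rw [hLa] at h1
    exact Stmt4Aux.nil_not_mem_La_N hne h1
end

section
/- If the action set Act is infinite, then verdict equivalence and ω-verdict equivalence coincide on closed monitors: m ≃_ω n implies m ≃ n. -/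
variable {Act : Type}

/-- Actions occurring syntactically in a monitor. -/
def acts : Mon Act → List Act
  | Mon.act a m => a :: acts m
  | Mon.plus m n => acts m ++ acts n
  | _ => []

lemma step_acts {p p' : Mon Act} {α : Option Act} (h : Step p α p') :
    ∀ a ∈ acts p', a ∈ acts p := by
  induction h with
  | act a m => intro x hx; exact List.mem_cons_of_mem _ hx
  | plusL _ ih => intro x hx; exact List.mem_append_left _ (ih x hx)
  | plusR _ ih => intro x hx; exact List.mem_append_right _ (ih x hx)
  | verdict _ => intro x hx; exact hx

lemma step_fresh {p p' : Mon Act} {b : Act} (h : Step p (some b) p')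
    (hb : b ∉ acts p) : Step p none p' ∧ IsVerdict p' := by
  generalize hα : (some b : Option Act) = α at h
  induction h with
  | act a m =>
    exfalso; apply hb
    cases hα
    exact List.mem_cons_self
  | plusL h ih =>
    have := ih (fun hx => hb (List.mem_append_left _ hx)) hα
    exact ⟨Step.plusL this.1, this.2⟩
  | plusR h ih =>
    have := ih (fun hx => hb (List.mem_append_right _ hx)) hα
    exact ⟨Step.plusR this.1, this.2⟩
  | verdict hv => exact ⟨Step.verdict hv, hv⟩

lemma verdict_step {v q : Mon Act} {α : Option Act} (hv : IsVerdict v)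
    (h : Step v α q) : q = v := by
  cases hv <;> cases h <;> rfl

lemma verdict_taustar {v q : Mon Act} (hv : IsVerdict v) (h : TauStar v q) : q = v := by
  induction h with
  | refl => rfl
  | tail _ hstep ih => subst ih; exact verdict_step hv hstep

lemma verdict_wtrace {v q : Mon Act} {s : List Act} (hv : IsVerdict v)
    (h : WTrace v s q) : q = v := by
  induction h with
  | nil hτ => exact verdict_taustar hv hτ
  | cons hτ hstep _ ih =>
    have h1 := verdict_taustar hv hτ
    subst h1
    have h2 := verdict_step hv hstep
    subst h2
    exact ih hv

lemma taustar_acts {p q : Mon Act} (h : TauStar p q) : ∀ a ∈ acts q, a ∈ acts p := by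
  induction h with
  | refl => intro a ha; exact ha
  | tail _ hstep ih => intro a ha; exact ih a (step_acts hstep a ha)

lemma wtrace_acts {p q : Mon Act} {s : List Act} (h : WTrace p s q) :
    ∀ a ∈ acts q, a ∈ acts p := by
  induction h with
  | nil hτ => exact taustar_acts hτ
  | cons hτ hstep _ ih =>
    intro a ha
    exact taustar_acts hτ a (step_acts hstep a (ih a ha))

lemma taustar_wtrace {p q r : Mon Act} {s : List Act} (hτ : TauStar p q)
    (h : WTrace q s r) : WTrace p s r := by
  cases h with
  | nil hτ' => exact WTrace.nil (hτ.trans hτ')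
  | cons hτ' hstep hrest => exact WTrace.cons (hτ.trans hτ') hstep hrest

lemma wtrace_append {p q r : Mon Act} {s t : List Act} (h1 : WTrace p s q)
    (h2 : WTrace q t r) : WTrace p (s ++ t) r := by
  induction h1 with
  | nil hτ => exact taustar_wtrace hτ h2
  | cons hτ hstep _ ih => exact WTrace.cons hτ hstep (ih h2)

lemma wtrace_split {r : Mon Act} {t : List Act} :
    ∀ (s : List Act) (p : Mon Act), WTrace p (s ++ t) r →
      ∃ q, WTrace p s q ∧ WTrace q t r := by
  intro s
  induction s with
  | nil =>
    intro p h
    exact ⟨p, WTrace.nil Relation.ReflTransGen.refl, h⟩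
  | cons a s' ih =>
    intro p h
    cases h with
    | cons hτ hstep hrest =>
      obtain ⟨q, hq1, hq2⟩ := ih _ hrest
      exact ⟨q, WTrace.cons hτ hstep hq1, hq2⟩

lemma verdict_any_trace {v : Mon Act} (hv : IsVerdict v) (t : List Act) :
    WTrace v t v := by
  induction t with
  | nil => exact WTrace.nil Relation.ReflTransGen.refl
  | cons a t ih => exact WTrace.cons Relation.ReflTransGen.refl (Step.verdict hv) ih

lemma strip_fresh {p v : Mon Act} {b : Act} {t : List Act} (hb : b ∉ acts p)
    (hv : IsVerdict v) (h : WTrace p (b :: t) v) : TauStar p v := by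
  cases h with
  | cons hτ hstep hrest =>
    have hb1 : b ∉ acts _ := fun hx => hb (taustar_acts hτ b hx)
    obtain ⟨hτstep, hverd⟩ := step_fresh hstep hb1
    have := verdict_wtrace hverd hrest
    subst this
    exact hτ.tail hτstep

lemma strip_replicate {p v : Mon Act} {b : Act} {s : List Act} (hb : b ∉ acts p)
    (hv : IsVerdict v) : ∀ k, WTrace p (s ++ List.replicate k b) v → WTrace p s v := by
  intro k
  induction k with
  | zero => simpa using id
  | succ k ih =>
    intro h
    rw [List.replicate_succ', ← List.append_assoc] at h
    obtain ⟨q, hq1, hq2⟩ := wtrace_split (s ++ List.replicate k b) _ h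
    have hbq : b ∉ acts q := fun hx => hb (wtrace_acts hq1 b hx)
    have hτ : TauStar q v := strip_fresh hbq hv hq2
    have : WTrace p ((s ++ List.replicate k b) ++ ([] : List Act)) v :=
      wtrace_append hq1 (WTrace.nil hτ)
    rw [List.append_nil] at this
    exact ih this

lemma range_map_getD (s : List Act) (b : Act) :
    ∀ k, (List.range (s.length + k)).map (fun i => s.getD i b)
      = s ++ List.replicate k b := by
  intro k
  induction k with
  | zero =>
    simp only [Nat.add_zero, List.replicate_zero, List.append_nil]
    apply List.ext_getElem
    · simp
    · intro i h1 h2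
      have h2' : i < s.length := by simpa using h2
      simp only [List.getElem_map, List.getElem_range]
      exact List.getD_eq_getElem s b h2'
  | succ k ih =>
    rw [← Nat.add_assoc, List.range_succ, List.map_append, ih, List.replicate_succ',
      ← List.append_assoc]
    simp only [List.map_cons, List.map_nil]
    rw [List.getD_eq_default s b (Nat.le_add_right _ _)]

lemma lang_subset_of_omega {v : Mon Act} (hv : IsVerdict v) {m n : Mon Act} {b : Act}
    (hbn : b ∉ acts n)
    (hsub : omegaCl {s | WTrace m s v} ⊆ omegaCl {s | WTrace n s v}) :
    {s : List Act | WTrace m s v} ⊆ {s | WTrace n s v} := by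
  intro s hs
  set w : ℕ → Act := fun i => s.getD i b with hw
  have hwm : w ∈ omegaCl {s | WTrace m s v} := by
    refine ⟨s.length, ?_⟩
    have := range_map_getD s b 0
    simp only [Nat.add_zero, List.replicate_zero, List.append_nil] at this
    rw [this]
    exact hs
  obtain ⟨ℓ, hℓ⟩ := hsub hwm
  -- extend ℓ to L := max ℓ s.length
  set L := max ℓ s.length with hL
  have hℓL : ℓ ≤ L := le_max_left _ _
  have hLtrace : WTrace n ((List.range L).map w) v := by
    obtain ⟨d, hd⟩ := Nat.exists_eq_add_of_le hℓL
    rw [hd, List.range_add, List.map_append]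
    exact wtrace_append hℓ (verdict_any_trace hv _)
  have hsL : s.length ≤ L := le_max_right _ _
  obtain ⟨k, hk⟩ := Nat.exists_eq_add_of_le hsL
  rw [hk] at hLtrace
  rw [range_map_getD s b k] at hLtrace
  exact strip_replicate hbn hv k hLtrace

lemma exists_fresh [Infinite Act] (m n : Mon Act) :
    ∃ b : Act, b ∉ acts m ∧ b ∉ acts n := by
  have hfin : {a : Act | a ∈ acts m ++ acts n}.Finite := (acts m ++ acts n).finite_toSet
  obtain ⟨b, hb⟩ := hfin.infinite_compl.nonempty
  rw [Set.mem_compl_iff, Set.mem_setOf_eq, List.mem_append] at hb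
  push_neg at hb
  exact ⟨b, hb.1, hb.2⟩

/-- over an infinite alphabet, ω-verdict equivalence implies verdict
equivalence on closed monitors. -/
theorem stmt5 [Infinite Act] (m n : Mon Act) (hm : Closed m) (hn : Closed n)
    (h : OmegaEq m n) : VerdEq m n := by
  obtain ⟨b, hbm, hbn⟩ := exists_fresh m n
  obtain ⟨ha, hr⟩ := h
  constructor
  · apply le_antisymm
    · exact lang_subset_of_omega IsVerdict.yes hbn (le_of_eq ha)
    · exact lang_subset_of_omega IsVerdict.yes hbm (le_of_eq ha.symm)
  · apply le_antisymm
    · exact lang_subset_of_omega IsVerdict.no hbn (le_of_eq hr)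
    · exact lang_subset_of_omega IsVerdict.no hbm (le_of_eq hr.symm)
end

section
/- For every a ∈ Act and all closed monitors m, n, the distributivity axiom is sound with respect to verdict equivalence: a.(m + n) ≃ a.m + a.n. -/
variable {Act : Type}

lemma wtrace_plus_left {m n v : Mon Act} {s : List Act} (hv : IsVerdict v)
    (h : WTrace m s v) : WTrace (Mon.plus m n) s v := by
  cases h with
  | nil h =>
    rcases Relation.ReflTransGen.cases_head h with rfl | ⟨p, hstep, hrest⟩
    · exact WTrace.nil (Relation.ReflTransGen.single (Step.plusL (Step.verdict hv)))
    · exact WTrace.nil (Relation.ReflTransGen.head (Step.plusL hstep) hrest)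
  | cons h1 h2 h3 =>
    rcases Relation.ReflTransGen.cases_head h1 with rfl | ⟨p, hstep, hrest⟩
    · exact WTrace.cons Relation.ReflTransGen.refl (Step.plusL h2) h3
    · exact WTrace.cons (Relation.ReflTransGen.head (Step.plusL hstep) hrest) h2 h3

lemma wtrace_plus_right {m n v : Mon Act} {s : List Act} (hv : IsVerdict v)
    (h : WTrace n s v) : WTrace (Mon.plus m n) s v := by
  cases h with
  | nil h =>
    rcases Relation.ReflTransGen.cases_head h with rfl | ⟨p, hstep, hrest⟩
    · exact WTrace.nil (Relation.ReflTransGen.single (Step.plusR (Step.verdict hv)))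
    · exact WTrace.nil (Relation.ReflTransGen.head (Step.plusR hstep) hrest)
  | cons h1 h2 h3 =>
    rcases Relation.ReflTransGen.cases_head h1 with rfl | ⟨p, hstep, hrest⟩
    · exact WTrace.cons Relation.ReflTransGen.refl (Step.plusR h2) h3
    · exact WTrace.cons (Relation.ReflTransGen.head (Step.plusR hstep) hrest) h2 h3

lemma wtrace_plus_inv {m n v : Mon Act} {s : List Act} (hv : IsVerdict v)
    (h : WTrace (Mon.plus m n) s v) : WTrace m s v ∨ WTrace n s v := by
  cases h with
  | nil h =>
    rcases Relation.ReflTransGen.cases_head h with heq | ⟨p, hstep, hrest⟩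
    · cases hv <;> exact absurd heq (by simp)
    · cases hstep with
      | plusL h' => exact Or.inl (WTrace.nil (Relation.ReflTransGen.head h' hrest))
      | plusR h' => exact Or.inr (WTrace.nil (Relation.ReflTransGen.head h' hrest))
      | verdict hv' => cases hv'
  | cons h1 h2 h3 =>
    rcases Relation.ReflTransGen.cases_head h1 with heq | ⟨p, hstep, hrest⟩
    · cases heq
      cases h2 with
      | plusL h' => exact Or.inl (WTrace.cons Relation.ReflTransGen.refl h' h3)
      | plusR h' => exact Or.inr (WTrace.cons Relation.ReflTransGen.refl h' h3)
      | verdict hv' => cases hv'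
    · cases hstep with
      | plusL h' =>
        exact Or.inl (WTrace.cons (Relation.ReflTransGen.head h' hrest) h2 h3)
      | plusR h' =>
        exact Or.inr (WTrace.cons (Relation.ReflTransGen.head h' hrest) h2 h3)
      | verdict hv' => cases hv'

lemma wtrace_act_inv {a : Act} {m v : Mon Act} {s : List Act} (hv : IsVerdict v)
    (hne : ¬ IsVerdict (Mon.act a m))
    (h : WTrace (Mon.act a m) s v) : ∃ s', s = a :: s' ∧ WTrace m s' v := by
  cases h with
  | nil h =>
    rcases Relation.ReflTransGen.cases_head h with heq | ⟨p, hstep, hrest⟩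
    · cases hv <;> exact absurd heq (by simp)
    · cases hstep with
      | verdict hv' => cases hv'
  | cons h1 h2 h3 =>
    rcases Relation.ReflTransGen.cases_head h1 with heq | ⟨p, hstep, hrest⟩
    · cases heq
      cases h2 with
      | act => exact ⟨_, rfl, h3⟩
      | verdict hv' => cases hv'
    · cases hstep with
      | verdict hv' => cases hv'

lemma wtrace_act {a : Act} {m v : Mon Act} {s : List Act}
    (h : WTrace m s v) : WTrace (Mon.act a m) (a :: s) v :=
  WTrace.cons Relation.ReflTransGen.refl (Step.act a m) h

lemma key {a : Act} {m n v : Mon Act} (hv : IsVerdict v) :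
    {s | WTrace (Mon.act a (Mon.plus m n)) s v} =
    {s | WTrace (Mon.plus (Mon.act a m) (Mon.act a n)) s v} := by
  ext s
  simp only [Set.mem_setOf_eq]
  constructor
  · intro h
    obtain ⟨s', rfl, h'⟩ := wtrace_act_inv hv (by rintro ⟨⟩) h
    rcases wtrace_plus_inv hv h' with h'' | h''
    · exact wtrace_plus_left hv (wtrace_act h'')
    · exact wtrace_plus_right hv (wtrace_act h'')
  · intro h
    rcases wtrace_plus_inv hv h with h' | h'
    · obtain ⟨s', rfl, h''⟩ := wtrace_act_inv hv (by rintro ⟨⟩) h'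
      exact wtrace_act (wtrace_plus_left hv h'')
    · obtain ⟨s', rfl, h''⟩ := wtrace_act_inv hv (by rintro ⟨⟩) h'
      exact wtrace_act (wtrace_plus_right hv h'')

/-- soundness of the distributivity axiom `D_a`. -/
theorem stmt8 (a : Act) (m n : Mon Act) (hm : Closed m) (hn : Closed n) :
    VerdEq (Mon.act a (Mon.plus m n)) (Mon.plus (Mon.act a m) (Mon.act a n)) := by
  exact ⟨key IsVerdict.yes, key IsVerdict.no⟩
end

section
/- If Act is finite, then the ω-axiom Y_ω is sound for ω-verdict equivalence: yes ≃_ω Σ_{a ∈ Act} a.yes. Explicitly, L_a(yes)·Act^ω = Act^ω = L_a(Σ_{a∈Act} a.yes)·Act^ω and both rejection languages are empty. -/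
variable {Act : Type}

lemma step_yes_aux {α : Option Act} {m : Mon Act} (h : Step Mon.yes α m) : m = Mon.yes := by
  cases h; rfl

lemma tau_yes_aux {m : Mon Act} (h : TauStar Mon.yes m) : m = Mon.yes := by
  induction h with
  | refl => rfl
  | tail _ h ih => subst ih; exact step_yes_aux h

lemma wtrace_yes_aux {s : List Act} {m : Mon Act} (h : WTrace Mon.yes s m) : m = Mon.yes := by
  induction s generalizing m with
  | nil => cases h with | nil ht => exact tau_yes_aux ht
  | cons a s ih =>
    cases h with
    | cons ht hs hw =>
      have h1 := tau_yes_aux ht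
      subst h1
      have h2 := step_yes_aux hs
      subst h2
      exact ih hw

lemma yes_wtrace (s : List Act) : WTrace (Mon.yes : Mon Act) s Mon.yes := by
  induction s with
  | nil => exact WTrace.nil Relation.ReflTransGen.refl
  | cons a s ih =>
    exact WTrace.cons Relation.ReflTransGen.refl (Step.verdict IsVerdict.yes) ih

lemma mem_sumList_step {l : List (Mon Act)} {m m' : Mon Act} {α : Option Act}
    (hm : m ∈ l) (h : Step m α m') : Step (sumList l) α m' := by
  induction l with
  | nil => cases hm
  | cons x xs ih =>
    cases xs with
    | nil =>
      simp at hm; subst hm; exact h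
    | cons y ys =>
      rcases List.mem_cons.mp hm with h1 | h1
      · subst h1; exact Step.plusL h
      · exact Step.plusR (ih h1)

lemma step_sum_inv {l : List (Mon Act)} (hl : ∀ m ∈ l, ∃ a, m = Mon.act a Mon.yes)
    (hne : l ≠ []) {α : Option Act} {n : Mon Act} (h : Step (sumList l) α n) :
    ∃ a, α = some a ∧ n = Mon.yes := by
  induction l with
  | nil => exact absurd rfl hne
  | cons x xs ih =>
    obtain ⟨a, ha⟩ := hl x List.mem_cons_self
    cases xs with
    | nil =>
      subst ha
      cases h with
      | act => exact ⟨a, rfl, rfl⟩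
      | verdict hv => cases hv
    | cons y ys =>
      cases h with
      | plusL h =>
        subst ha
        cases h with
        | act => exact ⟨a, rfl, rfl⟩
        | verdict hv => cases hv
      | plusR h =>
        exact ih (fun m hm => hl m (List.mem_cons_of_mem _ hm)) (by simp) h
      | verdict hv => cases hv

lemma sum_no_wtrace_no {l : List (Mon Act)} (hl : ∀ m ∈ l, ∃ a, m = Mon.act a Mon.yes)
    (hne : l ≠ []) {s : List Act} (h : WTrace (sumList l) s Mon.no) : False := by
  have htau : ∀ m, TauStar (sumList l) m → m = sumList l := by
    intro m hm
    cases hm.cases_head with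
    | inl h => exact h.symm
    | inr h =>
      obtain ⟨c, hc, _⟩ := h
      obtain ⟨a, ha, _⟩ := step_sum_inv hl hne hc
      cases ha
  cases h with
  | nil ht =>
    have := htau _ ht
    -- sumList l = Mon.no is impossible
    cases l with
    | nil => exact hne rfl
    | cons x xs =>
      obtain ⟨a, ha⟩ := hl x List.mem_cons_self
      cases xs with
      | nil => subst ha; simp [sumList] at this
      | cons y ys => simp [sumList] at this
  | cons ht hs hw =>
    have h1 := htau _ ht
    subst h1
    obtain ⟨a, _, h2⟩ := step_sum_inv hl hne hs
    subst h2
    exact nomatch (wtrace_yes_aux hw)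

/-- soundness of `Y_ω` over a finite nonempty alphabet. -/
theorem stmt9 [Fintype Act] [Nonempty Act] :
    OmegaEq (Mon.yes : Mon Act)
        (sumList ((Finset.univ : Finset Act).toList.map (fun a => Mon.act a Mon.yes))) ∧
    omegaCl (La (Mon.yes : Mon Act)) = Set.univ ∧
    omegaCl (La (sumList ((Finset.univ : Finset Act).toList.map
        (fun a => Mon.act a Mon.yes)))) = Set.univ ∧
    Lr (Mon.yes : Mon Act) = ∅ ∧
    Lr (sumList ((Finset.univ : Finset Act).toList.map (fun a => Mon.act a Mon.yes))) = ∅ := by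
  set l := ((Finset.univ : Finset Act).toList.map (fun a => Mon.act a Mon.yes)) with hl_def
  have hl : ∀ m ∈ l, ∃ a, m = Mon.act a Mon.yes := by
    intro m hm
    simp [hl_def] at hm
    obtain ⟨a, ha⟩ := hm
    exact ⟨a, ha.symm⟩
  have hne : l ≠ [] := by
    intro h
    have h1 : (Classical.arbitrary Act) ∈ ((Finset.univ : Finset Act).toList) := by simp
    have h2 : Mon.act (Classical.arbitrary Act) Mon.yes ∈ l :=
      List.mem_map_of_mem h1
    rw [h] at h2
    cases h2
  have hLaYes : omegaCl (La (Mon.yes : Mon Act)) = Set.univ := by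
    ext w
    simp only [Set.mem_univ, iff_true, omegaCl, Set.mem_setOf_eq]
    exact ⟨0, by simpa [La] using yes_wtrace ([] : List Act)⟩
  have hLaSum : omegaCl (La (sumList l)) = Set.univ := by
    ext w
    simp only [Set.mem_univ, iff_true, omegaCl, Set.mem_setOf_eq]
    refine ⟨1, ?_⟩
    have hr : (List.range 1).map w = [w 0] := rfl
    rw [hr]
    show WTrace (sumList l) [w 0] Mon.yes
    have hmem : Mon.act (w 0) Mon.yes ∈ l := by simp [hl_def]
    exact WTrace.cons Relation.ReflTransGen.refl
      (mem_sumList_step hmem (Step.act (w 0) Mon.yes)) (yes_wtrace [])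
  have hLrYes : Lr (Mon.yes : Mon Act) = ∅ := by
    ext s
    simp only [Lr, Set.mem_setOf_eq, Set.mem_empty_iff_false, iff_false]
    intro h
    exact nomatch (wtrace_yes_aux h)
  have hLrSum : Lr (sumList l) = ∅ := by
    ext s
    simp only [Lr, Set.mem_setOf_eq, Set.mem_empty_iff_false, iff_false]
    exact sum_no_wtrace_no hl hne
  exact ⟨⟨hLaYes.trans hLaSum.symm, by rw [hLrYes, hLrSum]⟩, hLaYes, hLaSum, hLrYes, hLrSum⟩
end

section
/- Every closed monitor m is provably equal, using the axioms A1–A4 (commutativity, associativity, idempotence of +, and unit end), E_a (a.end = end), Y_a, N_a, and D_a (a.(x+y) = a.x + a.y), to some monitor m' in normal form with depth(m') ≤ depth(m). -/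
variable {Act : Type}

namespace Stmt11Aux

local notation m " ≋ " n => Deriv EvAx m n

/-- Instantiation helpers. -/
private def σ2 (m n : Mon Act) : ℕ → Mon Act :=
  fun i => if i = 0 then m else if i = 1 then n else Mon.end_

lemma dcomm (m n : Mon Act) : (Mon.plus m n) ≋ (Mon.plus n m) := by
  have h := Deriv.subst (σ2 m n) (Deriv.ax EvAx.A1)
  simpa [σ2, msubst, vx, vy] using h

lemma dassoc (m n p : Mon Act) :
    (Mon.plus m (Mon.plus n p)) ≋ (Mon.plus (Mon.plus m n) p) := by
  have h := Deriv.subst (fun i => if i = 0 then m else if i = 1 then n else p)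
    (Deriv.ax EvAx.A2)
  simpa [msubst, vx, vy, vz] using h

lemma didem (m : Mon Act) : (Mon.plus m m) ≋ m := by
  have h := Deriv.subst (fun _ => m) (Deriv.ax EvAx.A3)
  simpa [msubst, vx] using h

lemma dunit (m : Mon Act) : (Mon.plus m Mon.end_) ≋ m := by
  have h := Deriv.subst (fun _ => m) (Deriv.ax EvAx.A4)
  simpa [msubst, vx] using h

lemma dunitl (m : Mon Act) : (Mon.plus Mon.end_ m) ≋ m :=
  Deriv.trans (dcomm _ _) (dunit m)

lemma dDa (a : Act) (x y : Mon Act) :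
    (Mon.act a (Mon.plus x y)) ≋ (Mon.plus (Mon.act a x) (Mon.act a y)) := by
  have h := Deriv.subst (σ2 x y) (Deriv.ax (EvAx.Da a))
  simpa [σ2, msubst, vx, vy] using h

lemma sum_cons (x : Mon Act) (l : List (Mon Act)) :
    (sumList (x :: l)) ≋ (Mon.plus x (sumList l)) := by
  cases l with
  | nil => exact Deriv.symm (dunit x)
  | cons y t => exact Deriv.refl _

lemma sum_append (l₁ l₂ : List (Mon Act)) :
    (sumList (l₁ ++ l₂)) ≋ (Mon.plus (sumList l₁) (sumList l₂)) := by
  induction l₁ with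
  | nil => exact Deriv.symm (dunitl _)
  | cons x t ih =>
      refine Deriv.trans (sum_cons x (t ++ l₂)) ?_
      refine Deriv.trans (Deriv.plus (Deriv.refl x) ih) ?_
      refine Deriv.trans (dassoc _ _ _) ?_
      exact Deriv.plus (Deriv.symm (sum_cons x t)) (Deriv.refl _)

lemma sum_perm {l₁ l₂ : List (Mon Act)} (h : l₁.Perm l₂) :
    (sumList l₁) ≋ (sumList l₂) := by
  induction h with
  | nil => exact Deriv.refl _
  | cons x _ ih =>
      refine Deriv.trans (sum_cons _ _) (Deriv.trans (Deriv.plus (Deriv.refl x) ih)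
        (Deriv.symm (sum_cons _ _)))
  | swap x y l =>
      refine Deriv.trans (sum_cons _ _) ?_
      refine Deriv.trans (Deriv.plus (Deriv.refl y) (sum_cons _ _)) ?_
      refine Deriv.trans (dassoc _ _ _) ?_
      refine Deriv.trans (Deriv.plus (dcomm _ _) (Deriv.refl _)) ?_
      refine Deriv.trans (Deriv.symm (dassoc _ _ _)) ?_
      refine Deriv.trans (Deriv.plus (Deriv.refl x) (Deriv.symm (sum_cons _ _))) ?_
      exact Deriv.symm (sum_cons _ _)
  | trans _ _ ih₁ ih₂ => exact Deriv.trans ih₁ ih₂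

lemma absorb {x : Mon Act} {l : List (Mon Act)} (h : x ∈ l) :
    (sumList (x :: l)) ≋ (sumList l) := by
  induction l with
  | nil => cases h
  | cons a t ih =>
      rcases List.mem_cons.mp h with rfl | h
      · refine Deriv.trans (sum_cons _ _) ?_
        refine Deriv.trans (Deriv.plus (Deriv.refl _) (sum_cons _ _)) ?_
        refine Deriv.trans (dassoc _ _ _) ?_
        refine Deriv.trans (Deriv.plus (didem _) (Deriv.refl _)) ?_
        exact Deriv.symm (sum_cons _ _)
      · refine Deriv.trans (sum_perm (List.Perm.swap a x t)) ?_
        refine Deriv.trans (sum_cons _ _) ?_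
        refine Deriv.trans (Deriv.plus (Deriv.refl a) (ih h)) ?_
        exact Deriv.symm (sum_cons _ _)

lemma sum_subset {l₁ l₂ : List (Mon Act)} (h : ∀ x ∈ l₁, x ∈ l₂) :
    (Mon.plus (sumList l₁) (sumList l₂)) ≋ (sumList l₂) := by
  induction l₁ with
  | nil => exact dunitl _
  | cons x t ih =>
      refine Deriv.trans (Deriv.plus (sum_cons x t) (Deriv.refl _)) ?_
      refine Deriv.trans (Deriv.symm (dassoc _ _ _)) ?_
      refine Deriv.trans (Deriv.plus (Deriv.refl x) (ih (fun y hy => h y (List.mem_cons_of_mem _ hy)))) ?_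
      refine Deriv.trans (Deriv.symm (sum_cons _ _)) ?_
      exact absorb (h x (List.mem_cons_self (a := x) (l := t)))

lemma sum_setEq {l₁ l₂ : List (Mon Act)} (h : ∀ x, x ∈ l₁ ↔ x ∈ l₂) :
    (sumList l₁) ≋ (sumList l₂) := by
  have h₁ : (sumList l₁) ≋ (Mon.plus (sumList l₂) (sumList l₁)) :=
    Deriv.symm (sum_subset (fun x hx => (h x).mpr hx))
  refine Deriv.trans h₁ (Deriv.trans (dcomm _ _) (sum_subset (fun x hx => (h x).mp hx)))

lemma depth_sum_cons (x : Mon Act) (l : List (Mon Act)) :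
    depth (sumList (x :: l)) = max (depth x) (depth (sumList l)) := by
  cases l with
  | nil => simp [sumList, depth]
  | cons y t => simp [sumList, depth]

lemma depth_sum_le {l : List (Mon Act)} {k : ℕ} (h : ∀ x ∈ l, depth x ≤ k) :
    depth (sumList l) ≤ k := by
  induction l with
  | nil => simp [sumList, depth]
  | cons x t ih =>
      rw [depth_sum_cons]
      exact max_le (h x (by simp)) (ih (fun y hy => h y (by simp [hy])))

lemma depth_le_of_mem {x : Mon Act} {l : List (Mon Act)} (h : x ∈ l) :
    depth x ≤ depth (sumList l) := by
  induction l with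
  | nil => cases h
  | cons y t ih =>
      rw [depth_sum_cons]
      rcases List.mem_cons.mp h with rfl | h
      · exact le_max_left _ _
      · exact le_trans (ih h) (le_max_right _ _)

/-- verdict list. -/
def vlist (hy hn : Bool) : List (Mon Act) :=
  (if hy then [Mon.yes] else []) ++ (if hn then [Mon.no] else [])

lemma mem_vlist {x : Mon Act} {hy hn : Bool} (h : x ∈ vlist hy hn) :
    x = Mon.yes ∨ x = Mon.no := by
  cases hy <;> cases hn <;> simp [vlist] at h <;> tauto

lemma buildNF_eq (l : List (Act × Mon Act)) (hy hn : Bool) :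
    buildNF l hy hn = sumList (l.map (fun p => Mon.act p.1 p.2) ++ vlist hy hn) := by
  simp [buildNF, vlist, List.append_assoc]

/-- action part sum. -/
def actSum (l : List (Act × Mon Act)) : Mon Act :=
  sumList (l.map (fun p => Mon.act p.1 p.2))

lemma vmerge (y₁ n₁ y₂ n₂ : Bool) :
    (Mon.plus (sumList (vlist (Act := Act) y₁ n₁)) (sumList (vlist y₂ n₂)))
      ≋ (sumList (vlist (y₁ || y₂) (n₁ || n₂))) := by
  refine Deriv.trans (Deriv.symm (sum_append _ _)) (sum_setEq ?_)
  intro x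
  cases y₁ <;> cases n₁ <;> cases y₂ <;> cases n₂ <;> simp [vlist] <;> tauto

lemma dexch (a b c d : Mon Act) :
    (Mon.plus (Mon.plus a b) (Mon.plus c d)) ≋ (Mon.plus (Mon.plus a c) (Mon.plus b d)) := by
  refine Deriv.trans (Deriv.symm (dassoc _ _ _)) ?_
  refine Deriv.trans (Deriv.plus (Deriv.refl a) (dassoc _ _ _)) ?_
  refine Deriv.trans (Deriv.plus (Deriv.refl a) (Deriv.plus (dcomm _ _) (Deriv.refl d))) ?_
  refine Deriv.trans (Deriv.plus (Deriv.refl a) (Deriv.symm (dassoc _ _ _))) ?_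
  exact dassoc _ _ _

lemma nf_end : NF (Mon.end_ : Mon Act) := by
  have h := NF.mk ([] : List (Act × Mon Act)) false false (by simp) (by simp) (by simp)
  simpa [buildNF, sumList] using h

lemma nf_yes : NF (Mon.yes : Mon Act) := by
  have h := NF.mk ([] : List (Act × Mon Act)) true false (by simp) (by simp) (by simp)
  simpa [buildNF, sumList] using h

lemma nf_no : NF (Mon.no : Mon Act) := by
  have h := NF.mk ([] : List (Act × Mon Act)) false true (by simp) (by simp) (by simp)
  simpa [buildNF, sumList] using h

end Stmt11Aux
namespace Stmt11Aux

local notation m " ≋ " n => Deriv EvAx m n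

lemma mergeNF : ∀ k : ℕ, ∀ m n : Mon Act, NF m → NF n → depth m ≤ k → depth n ≤ k →
    ∃ p : Mon Act, NF p ∧ ((Mon.plus m n) ≋ p) ∧ depth p ≤ k := by
  intro k
  induction k using Nat.strong_induction_on with
  | _ k IH =>
  -- merging of action lists
  have mergeList : ∀ l₁ l₂ : List (Act × Mon Act),
      (∀ p ∈ l₂, p.2 ≠ Mon.end_) → (∀ p ∈ l₂, NF p.2) →
      (∀ p ∈ l₁, p.2 ≠ Mon.end_) → (∀ p ∈ l₁, NF p.2) →
      (l₂.map Prod.fst).Nodup →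
      (∀ p ∈ l₁, depth p.2 + 1 ≤ k) → (∀ p ∈ l₂, depth p.2 + 1 ≤ k) →
      ∃ L : List (Act × Mon Act),
        (L.map Prod.fst).Nodup ∧ (∀ p ∈ L, p.2 ≠ Mon.end_) ∧ (∀ p ∈ L, NF p.2) ∧
        ((Mon.plus (actSum l₁) (actSum l₂)) ≋ (actSum L)) ∧
        (∀ p ∈ L, depth p.2 + 1 ≤ k) := by
    intro l₁
    induction l₁ with
    | nil =>
        intro l₂ h1 h2 _ _ h5 _ h7
        exact ⟨l₂, h5, h1, h2, dunitl _, h7⟩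
    | cons q t ih =>
        intro l₂ h1 h2 hne hnf h5 h6 h7
        obtain ⟨a, x⟩ := q
        obtain ⟨L', hnd', hne', hnf', hd', hdep'⟩ :=
          ih l₂ h1 h2 (fun p hp => hne p (by simp [hp])) (fun p hp => hnf p (by simp [hp]))
            h5 (fun p hp => h6 p (by simp [hp])) h7
        have hx : depth x + 1 ≤ k := h6 (a, x) (by simp)
        have hstep : (Mon.plus (actSum ((a, x) :: t)) (actSum l₂))
            ≋ (Mon.plus (Mon.act a x) (actSum L')) := by
          refine Deriv.trans (Deriv.plus (sum_cons _ _) (Deriv.refl _)) ?_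
          refine Deriv.trans (Deriv.symm (dassoc _ _ _)) ?_
          exact Deriv.plus (Deriv.refl _) hd'
        by_cases hmem : a ∈ L'.map Prod.fst
        · -- key collision
          have hexy : ∃ y, (a, y) ∈ L' := by
            obtain ⟨q, hq, h⟩ := List.mem_map.mp hmem
            refine ⟨q.2, ?_⟩
            rw [← h]
            simpa using hq
          obtain ⟨y, hp⟩ := hexy
          obtain ⟨s, t', hL'⟩ := List.append_of_mem hp
          subst hL'
          have hper : (s ++ (a, y) :: t').Perm ((a, y) :: (s ++ t')) := List.perm_middle
          have hnd2 : (((a, y) :: (s ++ t')).map Prod.fst).Nodup :=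
            (hper.map Prod.fst).nodup_iff.mp hnd'
          have hmemrest : ∀ p ∈ s ++ t', p ∈ s ++ (a, y) :: t' := by
            intro p hp
            rcases List.mem_append.mp hp with h | h
            · exact List.mem_append.mpr (Or.inl h)
            · exact List.mem_append.mpr (Or.inr (List.mem_cons_of_mem _ h))
          have hy : depth y + 1 ≤ k := hdep' _ hp
          have hx' : depth x + 1 ≤ k := hx
          have hk1 : k - 1 < k := by omega
          obtain ⟨z, hznf, hzd, hzdep⟩ := IH (k - 1) hk1 x y
            (hnf (a, x) (by simp)) (hnf' _ hp) (by omega) (by omega)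
          have hstep2 : (Mon.plus (Mon.act a x) (actSum (s ++ (a, y) :: t')))
              ≋ (Mon.plus (Mon.act a z) (actSum (s ++ t'))) := by
            refine Deriv.trans (Deriv.plus (Deriv.refl _) (sum_perm (hper.map _))) ?_
            refine Deriv.trans (Deriv.plus (Deriv.refl _) (sum_cons _ _)) ?_
            refine Deriv.trans (dassoc _ _ _) ?_
            refine Deriv.plus ?_ (Deriv.refl _)
            exact Deriv.trans (Deriv.symm (dDa a x y)) (Deriv.act a hzd)
          by_cases hz : z = Mon.end_
          · subst hz
            refine ⟨s ++ t', (List.nodup_cons.mp hnd2).2,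
              fun p hp => hne' p (hmemrest p hp),
              fun p hp => hnf' p (hmemrest p hp), ?_,
              fun p hp => hdep' p (hmemrest p hp)⟩
            refine Deriv.trans hstep (Deriv.trans hstep2 ?_)
            refine Deriv.trans (Deriv.plus (Deriv.ax (EvAx.Ea a)) (Deriv.refl _)) ?_
            exact dunitl _
          · refine ⟨(a, z) :: (s ++ t'), ?_, ?_, ?_, ?_, ?_⟩
            · simpa using hnd2
            · intro p hp
              rcases List.mem_cons.mp hp with rfl | hp
              · exact hz
              · exact hne' p (hmemrest p hp)
            · intro p hp
              rcases List.mem_cons.mp hp with rfl | hp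
              · exact hznf
              · exact hnf' p (hmemrest p hp)
            · refine Deriv.trans hstep (Deriv.trans hstep2 ?_)
              exact Deriv.symm (sum_cons _ _)
            · intro p hp
              rcases List.mem_cons.mp hp with rfl | hp
              · simp only; omega
              · exact hdep' p (hmemrest p hp)
        · -- new key
          refine ⟨(a, x) :: L', ?_, ?_, ?_, ?_, ?_⟩
          · simpa [hmem] using hnd'
          · intro p hp
            rcases List.mem_cons.mp hp with rfl | hp
            · exact hne (a, x) (by simp)
            · exact hne' p hp
          · intro p hp
            rcases List.mem_cons.mp hp with rfl | hp
            · exact hnf (a, x) (by simp)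
            · exact hnf' p hp
          · exact Deriv.trans hstep (Deriv.symm (sum_cons _ _))
          · intro p hp
            rcases List.mem_cons.mp hp with rfl | hp
            · exact hx
            · exact hdep' p hp
  -- main merge
  intro m n hm hn hdm hdn
  obtain ⟨l₁, y₁, n₁, hnd₁, hne₁, hnf₁⟩ := hm
  obtain ⟨l₂, y₂, n₂, hnd₂, hne₂, hnf₂⟩ := hn
  have hdep₁ : ∀ p ∈ l₁, depth p.2 + 1 ≤ k := by
    intro p hp
    have : depth (Mon.act p.1 p.2) ≤ depth (buildNF l₁ y₁ n₁) := by
      rw [buildNF_eq]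
      refine depth_le_of_mem ?_
      refine List.mem_append.mpr (Or.inl ?_)
      exact List.mem_map.mpr ⟨p, hp, rfl⟩
    have h2 : depth (Mon.act p.1 p.2) = depth p.2 + 1 := rfl
    have h3 := le_trans this hdm
    rw [h2] at h3
    exact h3
  have hdep₂ : ∀ p ∈ l₂, depth p.2 + 1 ≤ k := by
    intro p hp
    have : depth (Mon.act p.1 p.2) ≤ depth (buildNF l₂ y₂ n₂) := by
      rw [buildNF_eq]
      refine depth_le_of_mem ?_
      refine List.mem_append.mpr (Or.inl ?_)
      exact List.mem_map.mpr ⟨p, hp, rfl⟩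
    have h2 : depth (Mon.act p.1 p.2) = depth p.2 + 1 := rfl
    have h3 := le_trans this hdn
    rw [h2] at h3
    exact h3
  obtain ⟨L, hndL, hneL, hnfL, hdL, hdepL⟩ :=
    mergeList l₁ l₂ hne₂ hnf₂ hne₁ hnf₁ hnd₂ hdep₁ hdep₂
  refine ⟨buildNF L (y₁ || y₂) (n₁ || n₂), NF.mk L _ _ hndL hneL hnfL, ?_, ?_⟩
  · rw [buildNF_eq, buildNF_eq, buildNF_eq]
    refine Deriv.trans (Deriv.plus (sum_append _ _) (sum_append _ _)) ?_
    refine Deriv.trans (dexch _ _ _ _) ?_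
    refine Deriv.trans (Deriv.plus hdL (vmerge _ _ _ _)) ?_
    exact Deriv.symm (sum_append _ _)
  · rw [buildNF_eq]
    refine depth_sum_le ?_
    intro x hx
    rcases List.mem_append.mp hx with hx | hx
    · obtain ⟨p, hp, rfl⟩ := List.mem_map.mp hx
      have := hdepL p hp
      simpa [depth] using this
    · have : depth x = 0 := by
        rcases mem_vlist hx with rfl | rfl <;> simp [depth]
      omega

end Stmt11Aux
/-- normalization — every closed monitor is provably equal (in `E_v`)
to a normal form of no greater depth. -/
theorem stmt11 (m : Mon Act) (hm : Closed m) :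
    ∃ m' : Mon Act, NF m' ∧ Deriv EvAx m m' ∧ depth m' ≤ depth m := by
  induction m with
  | end_ =>
      exact ⟨Mon.end_, Stmt11Aux.nf_end, Deriv.refl _, le_refl _⟩
  | yes =>
      exact ⟨Mon.yes, Stmt11Aux.nf_yes, Deriv.refl _, le_refl _⟩
  | no =>
      exact ⟨Mon.no, Stmt11Aux.nf_no, Deriv.refl _, le_refl _⟩
  | var x => exact absurd hm (by simp [Closed])
  | act a m ih =>
      obtain ⟨p, hp, hd, hdep⟩ := ih hm
      by_cases hpe : p = Mon.end_
      · subst hpe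
        refine ⟨Mon.end_, Stmt11Aux.nf_end, ?_, by simp [depth]⟩
        exact Deriv.trans (Deriv.act a hd) (Deriv.ax (EvAx.Ea a))
      · refine ⟨Mon.act a p, ?_, Deriv.act a hd, ?_⟩
        · have h := NF.mk [(a, p)] false false (by simp)
            (by intro q hq; rcases List.mem_singleton.mp hq with rfl; exact hpe)
            (by intro q hq; rcases List.mem_singleton.mp hq with rfl; exact hp)
          simpa [buildNF, sumList] using h
        · have : depth (Mon.act a p) = depth p + 1 := rfl
          have : depth (Mon.act a m) = depth m + 1 := rfl
          simp only [depth]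
          omega
  | plus m n ihm ihn =>
      obtain ⟨hm1, hm2⟩ := hm
      obtain ⟨p, hp, hdp, hdep⟩ := ihm hm1
      obtain ⟨q, hq, hdq, hdeq⟩ := ihn hm2
      obtain ⟨r, hr, hdr, hder⟩ := Stmt11Aux.mergeNF (max (depth p) (depth q)) p q hp hq
        (le_max_left _ _) (le_max_right _ _)
      refine ⟨r, hr, Deriv.trans (Deriv.plus hdp hdq) hdr, ?_⟩
      have : depth (Mon.plus m n) = max (depth m) (depth n) := rfl
      omega
end

section
/- For every action a and every closed monitor m that contains no occurrence of the verdict no, the equation yes + a.m = yes is derivable from the axiom system E_v (axioms A1–A4, E_a, Y_a, N_a, D_a). -/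
variable {Act : Type}

lemma dcomm (m n : Mon Act) : Deriv EvAx (Mon.plus m n) (Mon.plus n m) := by
  have := Deriv.subst (E := EvAx) (fun i => if i = 0 then m else n)
    (Deriv.ax EvAx.A1)
  simpa [msubst, vx, vy] using this

lemma dassoc (m n p : Mon Act) :
    Deriv EvAx (Mon.plus m (Mon.plus n p)) (Mon.plus (Mon.plus m n) p) := by
  have := Deriv.subst (E := EvAx) (fun i => if i = 0 then m else if i = 1 then n else p)
    (Deriv.ax EvAx.A2)
  simpa [msubst, vx, vy, vz] using this

lemma didem (m : Mon Act) : Deriv EvAx (Mon.plus m m) m := by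
  have := Deriv.subst (E := EvAx) (fun _ => m) (Deriv.ax EvAx.A3)
  simpa [msubst, vx] using this

lemma dunit (m : Mon Act) : Deriv EvAx (Mon.plus m Mon.end_) m := by
  have := Deriv.subst (E := EvAx) (fun _ => m) (Deriv.ax EvAx.A4)
  simpa [msubst, vx] using this

lemma ddistr (a : Act) (m n : Mon Act) :
    Deriv EvAx (Mon.act a (Mon.plus m n)) (Mon.plus (Mon.act a m) (Mon.act a n)) := by
  have := Deriv.subst (E := EvAx) (fun i => if i = 0 then m else n)
    (Deriv.ax (EvAx.Da a))
  simpa [msubst, vx, vy] using this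

lemma yes_absorb (m : Mon Act) (hm : Closed m) (hnf : ¬ HasNo m) :
    Deriv EvAx (Mon.plus Mon.yes m) (Mon.yes : Mon Act) := by
  induction m with
  | end_ => exact dunit _
  | yes => exact didem _
  | no => exact absurd trivial hnf
  | var x => exact absurd hm (by simp [Closed])
  | act b m ih =>
      have hm' : Closed m := hm
      have hn' : ¬ HasNo m := hnf
      have ihm := ih hm' hn'
      -- yes + b.m = (yes + b.yes) + b.m = yes + (b.yes + b.m) = yes + b.(yes+m) = yes + b.yes = yes
      have step1 : Deriv EvAx (Mon.plus Mon.yes (Mon.act b m))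
          (Mon.plus (Mon.plus Mon.yes (Mon.act b Mon.yes)) (Mon.act b m)) :=
        Deriv.plus (Deriv.ax (EvAx.Ya b)) (Deriv.refl _)
      have step2 := (dassoc (Mon.yes : Mon Act) (Mon.act b Mon.yes) (Mon.act b m)).symm
      have step3 : Deriv EvAx (Mon.plus Mon.yes (Mon.plus (Mon.act b Mon.yes) (Mon.act b m)))
          (Mon.plus Mon.yes (Mon.act b (Mon.plus Mon.yes m))) :=
        Deriv.plus (Deriv.refl _) (Deriv.symm (ddistr b Mon.yes m))
      have step4 : Deriv EvAx (Mon.plus Mon.yes (Mon.act b (Mon.plus Mon.yes m)))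
          (Mon.plus Mon.yes (Mon.act b Mon.yes)) :=
        Deriv.plus (Deriv.refl _) (Deriv.act b ihm)
      exact (((step1.trans step2).trans step3).trans step4).trans
        (Deriv.symm (Deriv.ax (EvAx.Ya b)))
  | plus m n ihm ihn =>
      have h1 := ihm hm.1 (fun h => hnf (Or.inl h))
      have h2 := ihn hm.2 (fun h => hnf (Or.inr h))
      exact ((dassoc Mon.yes m n).trans (Deriv.plus h1 (Deriv.refl _))).trans h2

/-- for `no`-free closed `m`, `E_v ⊢ yes + a.m = yes`. -/
theorem stmt12 (a : Act) (m : Mon Act) (hm : Closed m) (hnf : ¬ HasNo m) :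
    Deriv EvAx (Mon.plus Mon.yes (Mon.act a m)) (Mon.yes : Mon Act) :=
  yes_absorb (Mon.act a m) hm hnf
end
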